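/- Let m₊, m₋ ∈ ℝ, let x₀ ∈ ℝ³, and let x, y : J → ℝ³ be differentiable functions on an interval J ⊆ ℝ with x(t) ≠ −x₀ and x(t) ≠ x₀ for all t, satisfying the Hamilton equations of the two-centre problem: x′(t) = y(t) and y′(t) = −m₊·(x(t)+x₀)/‖x(t)+x₀‖³ − m₋·(x(t)−x₀)/‖x(t)−x₀‖³. Then the function t ↦ 𝒩(x(t), y(t)) is constant on J, where 𝒩(x,y) = ‖x × y‖² + (x₀ · y)² + 2·(x · x₀)·( m₊/‖x+x₀‖ − m₋/‖x−x₀‖ ). -/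

import Mathlib

open scoped RealInnerProductSpace

/-- Cross product on `EuclideanSpace ℝ (Fin 3)`. -/
noncomputable def cross3 (a b : EuclideanSpace ℝ (Fin 3)) : EuclideanSpace ℝ (Fin 3) :=
  (EuclideanSpace.equiv (Fin 3) ℝ).symm
    (crossProduct (EuclideanSpace.equiv (Fin 3) ℝ a) (EuclideanSpace.equiv (Fin 3) ℝ b))

/-- The Euler first integral `𝒩(x,y)` of the two-centre problem with centres `±x₀`. -/
noncomputable def EulerN (mp mm : ℝ) (x₀ x y : EuclideanSpace ℝ (Fin 3)) : ℝ :=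
  ‖cross3 x y‖ ^ 2 + ⟪x₀, y⟫ ^ 2 +
    2 * ⟪x, x₀⟫ * (mp / ‖x + x₀‖ - mm / ‖x - x₀‖)

private lemma lagrange (a b : EuclideanSpace ℝ (Fin 3)) :
    ‖cross3 a b‖ ^ 2 = ⟪a, a⟫ * ⟪b, b⟫ - ⟪a, b⟫ ^ 2 := by
  simp only [← real_inner_self_eq_norm_sq]
  simp [cross3, cross_apply, PiLp.inner_apply, Fin.sum_univ_three, RCLike.inner_apply,
    EuclideanSpace.norm_sq_eq]
  ring

/-- along any solution of the two-centre problem, `𝒩(x(t),y(t))`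
is constant. -/
theorem stmt_15 (mp mm : ℝ) (x₀ : EuclideanSpace ℝ (Fin 3))
    (J : Set ℝ) (hJ : Convex ℝ J)
    (x y : ℝ → EuclideanSpace ℝ (Fin 3))
    (hne : ∀ t ∈ J, x t ≠ -x₀ ∧ x t ≠ x₀)
    (hx : ∀ t ∈ J, HasDerivAt x (y t) t)
    (hy : ∀ t ∈ J, HasDerivAt y
      ((-mp / ‖x t + x₀‖ ^ 3) • (x t + x₀) + (-mm / ‖x t - x₀‖ ^ 3) • (x t - x₀)) t) :
    ∀ s ∈ J, ∀ t ∈ J, EulerN mp mm x₀ (x s) (y s) = EulerN mp mm x₀ (x t) (y t) := by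
  set G : ℝ → ℝ := fun s => ⟪x s, x s⟫ * ⟪y s, y s⟫ - ⟪x s, y s⟫ ^ 2 + ⟪x₀, y s⟫ ^ 2 +
    2 * ⟪x s, x₀⟫ * (mp / ‖x s + x₀‖ - mm / ‖x s - x₀‖) with hG
  have hFG : ∀ s, EulerN mp mm x₀ (x s) (y s) = G s := by
    intro s; rw [hG]; simp only [EulerN, lagrange]
  have key : ∀ t ∈ J, HasDerivAt G 0 t := by
    intro t ht
    obtain ⟨h1, h2⟩ := hne t ht
    have hX := hx t ht
    have hY := hy t ht
    have hp0 : x t + x₀ ≠ 0 := by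
      intro h; exact h1 (by rw [add_eq_zero_iff_eq_neg] at h; exact h)
    have hm0 : x t - x₀ ≠ 0 := sub_ne_zero.mpr h2
    have hnp : ‖x t + x₀‖ ≠ 0 := norm_ne_zero_iff.mpr hp0
    have hnm : ‖x t - x₀‖ ≠ 0 := norm_ne_zero_iff.mpr hm0
    have hwp : HasDerivAt (fun s => x s + x₀) (y t) t := hX.add_const x₀
    have hwm : HasDerivAt (fun s => x s - x₀) (y t) t := hX.sub_const x₀
    have hspp := (hwp.inner ℝ hwp).sqrt (inner_self_ne_zero.mpr hp0)
    have hspm := (hwm.inner ℝ hwm).sqrt (inner_self_ne_zero.mpr hm0)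
    have hfunp : (fun s => Real.sqrt ⟪x s + x₀, x s + x₀⟫) = fun s => ‖x s + x₀‖ :=
      funext fun s => by rw [real_inner_self_eq_norm_sq, Real.sqrt_sq (norm_nonneg _)]
    have hfunm : (fun s => Real.sqrt ⟪x s - x₀, x s - x₀⟫) = fun s => ‖x s - x₀‖ :=
      funext fun s => by rw [real_inner_self_eq_norm_sq, Real.sqrt_sq (norm_nonneg _)]
    rw [hfunp] at hspp
    rw [hfunm] at hspm
    have hnormp : HasDerivAt (fun s => ‖x s + x₀‖) (⟪x t + x₀, y t⟫ / ‖x t + x₀‖) t := by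
      have heq : (⟪x t + x₀, y t⟫ + ⟪y t, x t + x₀⟫) / (2 * Real.sqrt ⟪x t + x₀, x t + x₀⟫)
          = ⟪x t + x₀, y t⟫ / ‖x t + x₀‖ := by
        rw [real_inner_comm (y t) (x t + x₀), real_inner_self_eq_norm_sq,
          Real.sqrt_sq (norm_nonneg _)]
        field_simp
        ring
      exact heq ▸ hspp
    have hnormm : HasDerivAt (fun s => ‖x s - x₀‖) (⟪x t - x₀, y t⟫ / ‖x t - x₀‖) t := by
      have heq : (⟪x t - x₀, y t⟫ + ⟪y t, x t - x₀⟫) / (2 * Real.sqrt ⟪x t - x₀, x t - x₀⟫)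
          = ⟪x t - x₀, y t⟫ / ‖x t - x₀‖ := by
        rw [real_inner_comm (y t) (x t - x₀), real_inner_self_eq_norm_sq,
          Real.sqrt_sq (norm_nonneg _)]
        field_simp
        ring
      exact heq ▸ hspm
    have hfp := (hasDerivAt_const t mp).div hnormp hnp
    have hfm := (hasDerivAt_const t mm).div hnormm hnm
    have hGd := ((((hX.inner ℝ hX).mul (hY.inner ℝ hY)).sub
        ((hX.inner ℝ hY).pow 2)).add
        (((hasDerivAt_const t x₀).inner ℝ hY).pow 2)).add
        (((hX.inner ℝ (hasDerivAt_const t x₀)).const_mul 2).mul (hfp.sub hfm))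
    rw [hG]
    have habs : ∀ d : ℝ, d = 0 → HasDerivAt (fun s => ⟪x s, x s⟫ * ⟪y s, y s⟫ - ⟪x s, y s⟫ ^ 2 + ⟪x₀, y s⟫ ^ 2 +
        2 * ⟪x s, x₀⟫ * (mp / ‖x s + x₀‖ - mm / ‖x s - x₀‖)) d t →
        HasDerivAt (fun s => ⟪x s, x s⟫ * ⟪y s, y s⟫ - ⟪x s, y s⟫ ^ 2 + ⟪x₀, y s⟫ ^ 2 +
        2 * ⟪x s, x₀⟫ * (mp / ‖x s + x₀‖ - mm / ‖x s - x₀‖)) 0 t := fun d hd h => hd ▸ h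
    refine habs _ ?_ hGd
    have hnp2 : ‖x t + x₀‖ ^ 2 = ⟪x t, x t⟫ + 2 * ⟪x t, x₀⟫ + ⟪x₀, x₀⟫ := by
      rw [← real_inner_self_eq_norm_sq]
      simp only [inner_add_left, inner_add_right, real_inner_comm x₀ (x t)]
      ring
    have hnm2 : ‖x t - x₀‖ ^ 2 = ⟪x t, x t⟫ - 2 * ⟪x t, x₀⟫ + ⟪x₀, x₀⟫ := by
      rw [← real_inner_self_eq_norm_sq]
      simp only [inner_sub_left, inner_sub_right, real_inner_comm x₀ (x t)]
      ring
    have ep : mp / ‖x t + x₀‖ = mp * (⟪x t, x t⟫ + 2 * ⟪x t, x₀⟫ + ⟪x₀, x₀⟫) / ‖x t + x₀‖ ^ 3 := by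
      rw [← hnp2]
      field_simp
    have em : mm / ‖x t - x₀‖ = mm * (⟪x t, x t⟫ - 2 * ⟪x t, x₀⟫ + ⟪x₀, x₀⟫) / ‖x t - x₀‖ ^ 3 := by
      rw [← hnm2]
      field_simp
    simp only [Pi.div_apply, Pi.sub_apply]
    rw [ep, em]
    simp only [inner_add_right, inner_add_left, inner_sub_left, inner_sub_right,
      real_inner_smul_right, real_inner_smul_left, inner_zero_left, inner_zero_right,
      real_inner_comm (y t), real_inner_comm x₀ (x t)]
    field_simp
    ring
  intro s hs t ht
  rw [hFG s, hFG t]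
  have hle := hJ.norm_image_sub_le_of_norm_hasDerivWithin_le (f := G) (f' := fun _ => (0 : ℝ))
    (C := 0) (fun u hu => (key u hu).hasDerivWithinAt) (fun u hu => by simp) hs ht
  rw [zero_mul] at hle
  have := norm_le_zero_iff.mp hle
  linarith [sub_eq_zero.mp this]
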